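/- The Shapley value satisfies reallocation-proofness: for any two coalitional games v, w on N and any coalition M ⊆ N, if v(M) = w(M) and v(S ∪ T) - v(S) = w(S ∪ T) - w(S) for all S ⊆ M and all T ⊆ N\M, then Σ_{i∈M} Sh_i(v) = Σ_{i∈M} Sh_i(w). -/

import Mathlib

open Finset

variable {ι : Type*} [Fintype ι] [DecidableEq ι]

/-- Dividends (Möbius inverse) of a coalitional game: d^v(S) = v(S) - Σ_{R ⊊ S} d^v(R). -/
noncomputable def dividend (v : Finset ι → ℝ) (S : Finset ι) : ℝ :=
  v S - ∑ R ∈ (S.powerset.erase S).attach, dividend v R.1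
termination_by S.card
decreasing_by
  have h := R.2
  simp only [mem_erase, mem_powerset] at h
  exact Finset.card_lt_card (Finset.ssubset_iff_subset_ne.mpr ⟨h.2, h.1⟩)

/-- The Shapley value Sh_i(v) = Σ_{S ⊆ N\{i}} (|N|-1-|S|)!|S|!/|N|! (v(S∪{i}) - v(S)). -/
noncomputable def shapley (v : Finset ι → ℝ) (i : ι) : ℝ :=
  ∑ S ∈ (univ.erase i).powerset,
    ((Nat.factorial (Fintype.card ι - 1 - S.card) * Nat.factorial S.card : ℕ) : ℝ) /
      (Nat.factorial (Fintype.card ι) : ℝ) *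
      (v (insert i S) - v S)

/-- Efficiency: payoffs sum to the worth of the grand coalition. -/
def Efficient (φ : (Finset ι → ℝ) → ι → ℝ) : Prop :=
  ∀ v : Finset ι → ℝ, v ∅ = 0 → ∑ i, φ v i = v univ

/-- Symmetry: interchangeable players get the same payoff. -/
def SymmetricRule (φ : (Finset ι → ℝ) → ι → ℝ) : Prop :=
  ∀ v : Finset ι → ℝ, v ∅ = 0 → ∀ i j : ι,
    (∀ S ⊆ univ \ ({i, j} : Finset ι), v (insert i S) = v (insert j S)) →
    φ v i = φ v j

/-- Null player: a player whose presence never changes any worth gets zero. -/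
def NullPlayerRule (φ : (Finset ι → ℝ) → ι → ℝ) : Prop :=
  ∀ v : Finset ι → ℝ, v ∅ = 0 → ∀ i : ι,
    (∀ S ⊆ univ \ ({i} : Finset ι), v (insert i S) = v S) → φ v i = 0

/-- Weak coalitional monotonicity. -/
def WeakCoalMono (φ : (Finset ι → ℝ) → ι → ℝ) : Prop :=
  ∀ v w : Finset ι → ℝ, v ∅ = 0 → w ∅ = 0 → ∀ M : Finset ι,
    v M ≥ w M → (∀ S : Finset ι, S ≠ M → v S = w S) →
    ∑ i ∈ M, φ v i ≥ ∑ i ∈ M, φ w i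

/-- Reallocation-proofness. -/
def ReallocProof (φ : (Finset ι → ℝ) → ι → ℝ) : Prop :=
  ∀ v w : Finset ι → ℝ, v ∅ = 0 → w ∅ = 0 → ∀ M : Finset ι,
    v M = w M →
    (∀ S ⊆ M, ∀ T ⊆ univ \ M, v (S ∪ T) - v S = w (S ∪ T) - w S) →
    ∑ i ∈ M, φ v i ≥ ∑ i ∈ M, φ w i

/-- Strong reallocation-proofness. -/
def StrongReallocProof (φ : (Finset ι → ℝ) → ι → ℝ) : Prop :=
  ∀ v w : Finset ι → ℝ, v ∅ = 0 → w ∅ = 0 → ∀ M : Finset ι,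
    (∀ T ⊆ univ \ M, v T = w T) → (∀ T : Finset ι, M ⊆ T → v T = w T) →
    ∑ i ∈ M, φ v i ≥ ∑ i ∈ M, φ w i

/-- Constrained marginality. -/
def ConstrainedMarg (φ : (Finset ι → ℝ) → ι → ℝ) : Prop :=
  ∀ v w : Finset ι → ℝ, v ∅ = 0 → w ∅ = 0 → ∀ i : ι,
    v univ = w univ →
    (∀ T ⊆ univ \ ({i} : Finset ι), v (insert i T) - v T = w (insert i T) - w T) →
    φ v i = φ w i

/-- Marginality. -/
def Marginality (φ : (Finset ι → ℝ) → ι → ℝ) : Prop :=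
  ∀ v w : Finset ι → ℝ, v ∅ = 0 → w ∅ = 0 → ∀ i : ι,
    (∀ T ⊆ univ \ ({i} : Finset ι), v (insert i T) - v T = w (insert i T) - w T) →
    φ v i = φ w i

/-- Strong monotonicity. -/
def StrongMono (φ : (Finset ι → ℝ) → ι → ℝ) : Prop :=
  ∀ v w : Finset ι → ℝ, v ∅ = 0 → w ∅ = 0 → ∀ i : ι,
    (∀ T ⊆ univ \ ({i} : Finset ι), v (insert i T) - v T ≥ w (insert i T) - w T) →
    φ v i ≥ φ w i

/-- Weak monotonicity. -/
def WeakMono (φ : (Finset ι → ℝ) → ι → ℝ) : Prop :=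
  ∀ v w : Finset ι → ℝ, v ∅ = 0 → w ∅ = 0 → ∀ i : ι,
    v univ ≥ w univ →
    (∀ T ⊆ univ \ ({i} : Finset ι), v (insert i T) - v T ≥ w (insert i T) - w T) →
    φ v i ≥ φ w i

/-- The unanimity game u_T. -/
def unanimity (T S : Finset ι) : ℝ := if T ⊆ S then 1 else 0


private lemma swap_helper (f : ι → Finset ι → ℝ) :
    ∑ i, ∑ S ∈ (univ.erase i).powerset, f i S
      = ∑ S ∈ univ.powerset, ∑ i ∈ univ \ S, f i S :=
  Finset.sum_comm' (fun i S => by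
    simp only [mem_univ, true_and, mem_powerset, Finset.subset_erase, mem_sdiff, and_comm])

private lemma reindex_helper (g : Finset ι → ℕ → ℝ) :
    ∑ S ∈ univ.powerset, ∑ i ∈ univ \ S, g (insert i S) S.card
      = ∑ T ∈ univ.powerset, ∑ i ∈ T, g T (T.card - 1) := by
  rw [Finset.sum_sigma' univ.powerset (fun S => univ \ S) (fun S i => g (insert i S) S.card),
      Finset.sum_sigma' univ.powerset (fun T => T) (fun T i => g T (T.card - 1))]
  refine Finset.sum_nbij' (fun p => ⟨insert p.2 p.1, p.2⟩) (fun p => ⟨p.1.erase p.2, p.2⟩)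
    ?_ ?_ ?_ ?_ ?_
  · rintro ⟨S, i⟩ hp
    simp only [Finset.mem_sigma, mem_powerset, mem_sdiff, mem_univ, true_and] at hp ⊢
    exact ⟨insert_subset (mem_univ i) hp.1, mem_insert_self _ _⟩
  · rintro ⟨T, i⟩ hp
    simp only [Finset.mem_sigma, mem_powerset, mem_sdiff, mem_univ, true_and] at hp ⊢
    exact ⟨(erase_subset _ _).trans hp.1, notMem_erase _ _⟩
  · rintro ⟨S, i⟩ hp
    simp only [Finset.mem_sigma, mem_powerset, mem_sdiff, mem_univ, true_and] at hp
    simp [Finset.erase_insert hp.2]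
  · rintro ⟨T, i⟩ hp
    simp only [Finset.mem_sigma, mem_powerset] at hp
    simp [Finset.insert_erase hp.2]
  · rintro ⟨S, i⟩ hp
    simp only [Finset.mem_sigma, mem_powerset, mem_sdiff, mem_univ, true_and] at hp
    simp [Finset.card_insert_of_notMem hp.2]

private lemma shapley_eff (v : Finset ι → ℝ) (hv : v ∅ = 0) :
    ∑ i, shapley v i = v univ := by
  classical
  rcases Nat.eq_zero_or_pos (Fintype.card ι) with h0 | hpos
  · have : IsEmpty ι := Fintype.card_eq_zero_iff.mp h0
    simp [Finset.univ_eq_empty, hv]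
  unfold shapley
  rw [swap_helper]
  have split : ∀ S ∈ (univ : Finset ι).powerset,
      ∑ i ∈ univ \ S, ((Nat.factorial (Fintype.card ι - 1 - S.card) *
          Nat.factorial S.card : ℕ) : ℝ) / (Nat.factorial (Fintype.card ι) : ℝ) *
          (v (insert i S) - v S)
        = (∑ i ∈ univ \ S, ((Nat.factorial (Fintype.card ι - 1 - S.card) *
          Nat.factorial S.card : ℕ) : ℝ) / (Nat.factorial (Fintype.card ι) : ℝ) *
          v (insert i S))
          - ((Fintype.card ι - S.card : ℕ) : ℝ) *
            (((Nat.factorial (Fintype.card ι - 1 - S.card) *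
              Nat.factorial S.card : ℕ) : ℝ) / (Nat.factorial (Fintype.card ι) : ℝ) * v S) := by
    intro S hS
    rw [mem_powerset] at hS
    simp only [mul_sub, Finset.sum_sub_distrib, Finset.sum_const, 
      Finset.card_sdiff_of_subset (Finset.subset_univ S), Finset.card_univ, nsmul_eq_mul]
  rw [Finset.sum_congr rfl split, Finset.sum_sub_distrib,
    reindex_helper (fun T k => ((Nat.factorial (Fintype.card ι - 1 - k) *
      Nat.factorial k : ℕ) : ℝ) / (Nat.factorial (Fintype.card ι) : ℝ) * v T)]
  simp only [Finset.sum_const, nsmul_eq_mul]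
  rw [← Finset.sum_sub_distrib]
  rw [Finset.sum_eq_single_of_mem univ (Finset.mem_powerset_self univ)]
  · rw [Finset.card_univ]
    simp only [Nat.sub_self, Nat.factorial_zero, one_mul, Nat.cast_zero, zero_mul, sub_zero]
    have h1 : ((Fintype.card ι : ℕ) : ℝ) *
        ((((Fintype.card ι - 1).factorial : ℕ) : ℝ) / (((Fintype.card ι).factorial : ℕ) : ℝ))
        = 1 := by
      rw [mul_div_assoc', div_eq_one_iff_eq (by exact_mod_cast (Nat.factorial_pos _).ne')]
      exact_mod_cast Nat.mul_factorial_pred hpos.ne'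
    rw [← mul_assoc, h1, one_mul]
  · intro T hT hTne
    rcases eq_or_ne T ∅ with rfl | hTne'
    · simp [hv]
    · have ht1 : 1 ≤ T.card := Finset.card_pos.mpr (Finset.nonempty_iff_ne_empty.mpr hTne')
      have htn : T.card < Fintype.card ι := by
        rw [← Finset.card_univ]
        exact Finset.card_lt_card (Finset.ssubset_iff_subset_ne.mpr
          ⟨Finset.mem_powerset.mp hT, hTne⟩)
      have key : T.card * (Nat.factorial (Fintype.card ι - 1 - (T.card - 1)) *
          Nat.factorial (T.card - 1))
          = (Fintype.card ι - T.card) * (Nat.factorial (Fintype.card ι - 1 - T.card) *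
            Nat.factorial T.card) := by
        have h1 : Fintype.card ι - 1 - (T.card - 1) = Fintype.card ι - T.card := by omega
        have h2 : Fintype.card ι - 1 - T.card = (Fintype.card ι - T.card) - 1 := by omega
        rw [h1, h2]
        have h3 : T.card * Nat.factorial (T.card - 1) = Nat.factorial T.card :=
          Nat.mul_factorial_pred (by omega)
        have h4 : (Fintype.card ι - T.card) * Nat.factorial ((Fintype.card ι - T.card) - 1)
            = Nat.factorial (Fintype.card ι - T.card) :=
          Nat.mul_factorial_pred (by omega)
        calc T.card * (Nat.factorial (Fintype.card ι - T.card) * Nat.factorial (T.card - 1))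
            = Nat.factorial (Fintype.card ι - T.card) *
              (T.card * Nat.factorial (T.card - 1)) := by ring
          _ = Nat.factorial (Fintype.card ι - T.card) * Nat.factorial T.card := by rw [h3]
          _ = ((Fintype.card ι - T.card) * Nat.factorial ((Fintype.card ι - T.card) - 1)) *
              Nat.factorial T.card := by rw [h4]
          _ = _ := by ring
      have keyR : (T.card : ℝ) * (((Nat.factorial (Fintype.card ι - 1 - (T.card - 1)) *
          Nat.factorial (T.card - 1) : ℕ) : ℝ) / (Nat.factorial (Fintype.card ι) : ℝ))
          = ((Fintype.card ι - T.card : ℕ) : ℝ) *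
            (((Nat.factorial (Fintype.card ι - 1 - T.card) *
              Nat.factorial T.card : ℕ) : ℝ) / (Nat.factorial (Fintype.card ι) : ℝ)) := by
        rw [mul_div_assoc', mul_div_assoc']
        congr 1
        exact_mod_cast key
      linear_combination (v T) * keyR

private lemma shapley_sub (v w : Finset ι → ℝ) (i : ι) :
    shapley (fun S => v S - w S) i = shapley v i - shapley w i := by
  unfold shapley
  rw [← Finset.sum_sub_distrib]
  exact Finset.sum_congr rfl fun S _ => by ring

private lemma shapley_null (v : Finset ι → ℝ) (i : ι)
    (h : ∀ S : Finset ι, v (insert i S) = v S) : shapley v i = 0 := by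
  unfold shapley
  simp [h]

/-- The Shapley value satisfies reallocation-proofness. -/
theorem shapley_reallocation_proof (v w : Finset ι → ℝ) (hv : v ∅ = 0) (hw : w ∅ = 0)
    (M : Finset ι) (hM : v M = w M)
    (hsyn : ∀ S ⊆ M, ∀ T ⊆ univ \ M, v (S ∪ T) - v S = w (S ∪ T) - w S) :
    ∑ i ∈ M, shapley v i = ∑ i ∈ M, shapley w i := by
  classical
  set d : Finset ι → ℝ := fun S => v S - w S with hd
  have hdM : ∀ R : Finset ι, d R = d (R ∩ M) := by
    intro R
    have h1 : R ∩ M ⊆ M := Finset.inter_subset_right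
    have h2 : R \ M ⊆ univ \ M := by
      intro x hx
      simp only [mem_sdiff, mem_univ, true_and] at hx ⊢
      exact hx.2
    have h3 : (R ∩ M) ∪ (R \ M) = R := by
      ext x; simp only [mem_union, mem_inter, mem_sdiff]; tauto
    have := hsyn (R ∩ M) h1 (R \ M) h2
    rw [h3] at this
    simp only [hd]
    linarith
  have hnull : ∀ j ∉ M, shapley d j = 0 := by
    intro j hj
    refine shapley_null d j fun S => ?_
    rw [hdM (insert j S), hdM S]
    congr 1
    ext x
    simp only [mem_inter, mem_insert]
    constructor
    · rintro ⟨hx | hx, hxM⟩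
      · exact absurd (hx ▸ hxM) hj
      · exact ⟨hx, hxM⟩
    · rintro ⟨hx, hxM⟩
      exact ⟨Or.inr hx, hxM⟩
  have hd0 : d ∅ = 0 := by simp [hd, hv, hw]
  have heff : ∑ i, shapley d i = d univ := shapley_eff d hd0
  have hduniv : d univ = 0 := by
    rw [hdM univ, Finset.univ_inter]
    simp [hd, hM]
  have hsum : ∑ i ∈ M, shapley d i = 0 := by
    have : ∑ i ∈ M, shapley d i = ∑ i, shapley d i := by
      rw [← Finset.sum_subset (Finset.subset_univ M)]
      intro x _ hx
      exact hnull x hx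
    rw [this, heff, hduniv]
  have : ∑ i ∈ M, (shapley v i - shapley w i) = 0 := by
    rw [← hsum]
    exact Finset.sum_congr rfl fun i _ => (shapley_sub v w i).symm
  rw [Finset.sum_sub_distrib] at this
  linarith
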